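/- In a ribbon category with simple tensor unit, if V is a simple self-dual object and ν(V) is the scalar defined by (θ_{V*} ⊗ id_V) ∘ c_{V,V*} ∘ b_V = ν(V) · (φ⁻¹ ⊗ φ) ∘ b_V for an isomorphism φ : V* → V, then ν(V)² = 1. -/

import Mathlib

open CategoryTheory CategoryTheory.MonoidalCategory

universe v u

/-- A ribbon category: a braided rigid monoidal category equipped with a natural
twist `θ` satisfying `θ_{V⊗W} = c_{W,V} ∘ c_{V,W} ∘ (θ_V ⊗ₘ θ_W)` and compatible with
duality: `(θ_V ⊗ₘ id_{V*}) ∘ b_V = (id_V ⊗ₘ θ_{V*}) ∘ b_V`. -/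
class RibbonCategory (C : Type u) [Category.{v} C] [MonoidalCategory C]
    [BraidedCategory C] [RightRigidCategory C] where
  twist : ∀ V : C, V ≅ V
  twist_naturality : ∀ {V W : C} (f : V ⟶ W), f ≫ (twist W).hom = (twist V).hom ≫ f
  twist_tensor : ∀ V W : C,
    (twist (V ⊗ W)).hom = ((twist V).hom ⊗ₘ (twist W).hom) ≫ (β_ V W).hom ≫ (β_ W V).hom
  twist_dual : ∀ V : C,
    η_ V Vᘁ ≫ ((twist V).hom ⊗ₘ 𝟙 Vᘁ) = η_ V Vᘁ ≫ (𝟙 V ⊗ₘ (twist Vᘁ).hom)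

/-- **The Frobenius–Schur indicator squares to one.**
In a `k`-linear ribbon category with simple tensor unit, if `V` is a simple self-dual
object (with self-duality witnessed by the isomorphism `φ : V* ≅ V`), and `ν` is the
scalar with `(θ_{V*} ⊗ₘ id_V) ∘ c_{V,V*} ∘ b_V = ν • (φ⁻¹ ⊗ₘ φ) ∘ b_V`, then `ν ^ 2 = 1`. -/
theorem frobeniusSchur_sq_eq_one {k : Type*} [Field k]
    {C : Type u} [Category.{v} C] [MonoidalCategory C] [BraidedCategory C]
    [RightRigidCategory C] [Preadditive C] [Linear k C]
    [MonoidalPreadditive C] [MonoidalLinear k C] [RibbonCategory C]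
    (hunit : ∀ f : (𝟙_ C) ⟶ 𝟙_ C, ∃ a : k, f = a • 𝟙 (𝟙_ C))
    (V : C)
    (hsimple : ∀ f : V ⟶ V, ∃ a : k, f = a • 𝟙 V)
    (hVnontriv : (𝟙 V : V ⟶ V) ≠ 0)
    (φ : Vᘁ ≅ V) (ν : k)
    (hν : η_ V Vᘁ ≫ (β_ V Vᘁ).hom ≫ ((RibbonCategory.twist Vᘁ).hom ⊗ₘ 𝟙 V)
        = ν • (η_ V Vᘁ ≫ (φ.inv ⊗ₘ φ.hom))) :
    ν ^ 2 = 1 := by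
  -- the coevaluation is nonzero
  have hη : η_ V Vᘁ ≠ 0 := by
    intro h
    apply hVnontriv
    have zig := ExactPairing.evaluation_coevaluation V Vᘁ
    rw [h] at zig
    simp only [MonoidalPreadditive.zero_whiskerRight, Limits.zero_comp] at zig
    have h1 : (𝟙 V : V ⟶ V) = (λ_ V).inv ≫ ((λ_ V).hom ≫ (ρ_ V).inv) ≫ (ρ_ V).hom := by
      simp
    rw [h1, ← zig]
    simp
  -- identity on the unit is nonzero
  have hone : (𝟙 (𝟙_ C) : 𝟙_ C ⟶ 𝟙_ C) ≠ 0 := by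
    intro h
    apply hη
    rw [← Category.id_comp (η_ V Vᘁ), h, Limits.zero_comp]
  -- the twist on the unit object is the identity
  have hunit_twist : (RibbonCategory.twist (𝟙_ C)).hom = 𝟙 (𝟙_ C) := by
    obtain ⟨a, ha⟩ := hunit (RibbonCategory.twist (𝟙_ C)).hom
    have hβ : (β_ (𝟙_ C) (𝟙_ C)).hom = 𝟙 _ := by
      have h := braiding_rightUnitor (C := C) (𝟙_ C)
      calc (β_ (𝟙_ C) (𝟙_ C)).hom
          = ((β_ (𝟙_ C) (𝟙_ C)).hom ≫ (ρ_ (𝟙_ C)).hom) ≫ (ρ_ (𝟙_ C)).inv := by simp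
        _ = (λ_ (𝟙_ C)).hom ≫ (ρ_ (𝟙_ C)).inv := by rw [h]
        _ = 𝟙 _ := by rw [unitors_equal]; simp
    have h1 : (RibbonCategory.twist (𝟙_ C ⊗ 𝟙_ C)).hom = a • 𝟙 _ := by
      calc (RibbonCategory.twist (𝟙_ C ⊗ 𝟙_ C)).hom
          = ((RibbonCategory.twist (𝟙_ C ⊗ 𝟙_ C)).hom ≫ (λ_ (𝟙_ C)).hom)
              ≫ (λ_ (𝟙_ C)).inv := by simp
        _ = ((λ_ (𝟙_ C)).hom ≫ (RibbonCategory.twist (𝟙_ C)).hom) ≫ (λ_ (𝟙_ C)).inv := by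
              rw [RibbonCategory.twist_naturality]
        _ = a • 𝟙 _ := by
              rw [ha]
              simp [Linear.comp_smul, Linear.smul_comp]
    have h2 : (RibbonCategory.twist (𝟙_ C ⊗ 𝟙_ C)).hom = (a * a) • 𝟙 _ := by
      rw [RibbonCategory.twist_tensor, ha, hβ]
      rw [MonoidalCategory.tensorHom_def]
      simp [smul_smul, mul_comm]
    have ha0 : a ≠ 0 := by
      intro h0
      apply hone
      have hi : (RibbonCategory.twist (𝟙_ C)).hom ≫ (RibbonCategory.twist (𝟙_ C)).inv
          = 𝟙 _ := by simp
      rw [ha, h0, zero_smul, Limits.zero_comp] at hi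
      exact hi.symm
    have haa : a * 1 = a * a := by
      rw [mul_one]
      by_contra hne
      have h0 : (a - a * a) • (𝟙 (𝟙_ C) ⊗ₘ 𝟙 (𝟙_ C)) = 0 := by
        rw [id_tensorHom_id, sub_smul, ← h1, ← h2, sub_self]
      have hz : (𝟙 (𝟙_ C) ⊗ₘ 𝟙 (𝟙_ C)) = 0 := by
        have hc := congrArg (fun x => (a - a * a)⁻¹ • x) h0
        simpa [smul_smul, inv_mul_cancel₀ (sub_ne_zero.mpr hne)] using hc
      apply hone
      calc (𝟙 (𝟙_ C) : _ ⟶ _)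
          = (λ_ (𝟙_ C)).inv ≫ (𝟙 (𝟙_ C) ⊗ₘ 𝟙 (𝟙_ C)) ≫ (λ_ (𝟙_ C)).hom := by simp
        _ = 0 := by rw [hz]; simp
    have ha1 : a = 1 := (mul_left_cancel₀ ha0 haa).symm
    rw [ha, ha1, one_smul]
  -- double rotation of η is η
  have key : η_ V Vᘁ ≫ (β_ V Vᘁ).hom ≫ ((RibbonCategory.twist Vᘁ).hom ⊗ₘ 𝟙 V)
        ≫ (β_ Vᘁ V).hom ≫ ((RibbonCategory.twist V).hom ⊗ₘ 𝟙 Vᘁ)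
      = η_ V Vᘁ := by
    have n1 : ((RibbonCategory.twist Vᘁ).hom ⊗ₘ 𝟙 V) ≫ (β_ Vᘁ V).hom
        = (β_ Vᘁ V).hom ≫ (𝟙 V ⊗ₘ (RibbonCategory.twist Vᘁ).hom) :=
      BraidedCategory.braiding_naturality _ _
    have comb : (𝟙 V ⊗ₘ (RibbonCategory.twist Vᘁ).hom)
          ≫ ((RibbonCategory.twist V).hom ⊗ₘ 𝟙 Vᘁ)
        = (RibbonCategory.twist V).hom ⊗ₘ (RibbonCategory.twist Vᘁ).hom := by
      rw [tensorHom_comp_tensorHom]; simp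
    have n2 : (β_ V Vᘁ).hom ≫ (β_ Vᘁ V).hom
          ≫ ((RibbonCategory.twist V).hom ⊗ₘ (RibbonCategory.twist Vᘁ).hom)
        = ((RibbonCategory.twist V).hom ⊗ₘ (RibbonCategory.twist Vᘁ).hom)
          ≫ (β_ V Vᘁ).hom ≫ (β_ Vᘁ V).hom := by
      rw [BraidedCategory.braiding_naturality_assoc, BraidedCategory.braiding_naturality]
    calc η_ V Vᘁ ≫ (β_ V Vᘁ).hom ≫ ((RibbonCategory.twist Vᘁ).hom ⊗ₘ 𝟙 V)
            ≫ (β_ Vᘁ V).hom ≫ ((RibbonCategory.twist V).hom ⊗ₘ 𝟙 Vᘁ)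
        = η_ V Vᘁ ≫ (β_ V Vᘁ).hom ≫ (β_ Vᘁ V).hom
            ≫ (𝟙 V ⊗ₘ (RibbonCategory.twist Vᘁ).hom)
            ≫ ((RibbonCategory.twist V).hom ⊗ₘ 𝟙 Vᘁ) := by
          rw [reassoc_of% n1]
      _ = η_ V Vᘁ ≫ (β_ V Vᘁ).hom ≫ (β_ Vᘁ V).hom
            ≫ ((RibbonCategory.twist V).hom ⊗ₘ (RibbonCategory.twist Vᘁ).hom) := by rw [comb]
      _ = η_ V Vᘁ ≫ ((RibbonCategory.twist V).hom ⊗ₘ (RibbonCategory.twist Vᘁ).hom)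
            ≫ (β_ V Vᘁ).hom ≫ (β_ Vᘁ V).hom := by rw [n2]
      _ = η_ V Vᘁ ≫ (RibbonCategory.twist (V ⊗ Vᘁ)).hom := by
          rw [RibbonCategory.twist_tensor]
      _ = (RibbonCategory.twist (𝟙_ C)).hom ≫ η_ V Vᘁ := by
          rw [← RibbonCategory.twist_naturality (η_ V Vᘁ)]
      _ = η_ V Vᘁ := by rw [hunit_twist]; simp
  -- apply hν twice
  have rot2 : (η_ V Vᘁ ≫ (φ.inv ⊗ₘ φ.hom)) ≫ (β_ Vᘁ V).hom
        ≫ ((RibbonCategory.twist V).hom ⊗ₘ 𝟙 Vᘁ)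
      = ν • η_ V Vᘁ := by
    have n3 : (φ.inv ⊗ₘ φ.hom) ≫ (β_ Vᘁ V).hom = (β_ V Vᘁ).hom ≫ (φ.hom ⊗ₘ φ.inv) :=
      BraidedCategory.braiding_naturality _ _
    have n4 : (φ.hom ⊗ₘ φ.inv) ≫ ((RibbonCategory.twist V).hom ⊗ₘ 𝟙 Vᘁ)
        = ((RibbonCategory.twist Vᘁ).hom ⊗ₘ 𝟙 V) ≫ (φ.hom ⊗ₘ φ.inv) := by
      rw [tensorHom_comp_tensorHom, tensorHom_comp_tensorHom]
      congr 1
      · exact RibbonCategory.twist_naturality φ.hom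
      · simp
    calc (η_ V Vᘁ ≫ (φ.inv ⊗ₘ φ.hom)) ≫ (β_ Vᘁ V).hom
            ≫ ((RibbonCategory.twist V).hom ⊗ₘ 𝟙 Vᘁ)
        = η_ V Vᘁ ≫ (β_ V Vᘁ).hom ≫ (φ.hom ⊗ₘ φ.inv)
            ≫ ((RibbonCategory.twist V).hom ⊗ₘ 𝟙 Vᘁ) := by
          rw [Category.assoc, reassoc_of% n3]
      _ = (η_ V Vᘁ ≫ (β_ V Vᘁ).hom ≫ ((RibbonCategory.twist Vᘁ).hom ⊗ₘ 𝟙 V))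
            ≫ (φ.hom ⊗ₘ φ.inv) := by
          rw [n4]; simp
      _ = (ν • (η_ V Vᘁ ≫ (φ.inv ⊗ₘ φ.hom))) ≫ (φ.hom ⊗ₘ φ.inv) := by rw [hν]
      _ = ν • (η_ V Vᘁ ≫ ((φ.inv ≫ φ.hom) ⊗ₘ (φ.hom ≫ φ.inv))) := by
          rw [Linear.smul_comp, Category.assoc, tensorHom_comp_tensorHom]
      _ = ν • η_ V Vᘁ := by simp
  have main : η_ V Vᘁ = (ν ^ 2) • η_ V Vᘁ := by
    calc η_ V Vᘁ
        = (η_ V Vᘁ ≫ (β_ V Vᘁ).hom ≫ ((RibbonCategory.twist Vᘁ).hom ⊗ₘ 𝟙 V))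
            ≫ (β_ Vᘁ V).hom ≫ ((RibbonCategory.twist V).hom ⊗ₘ 𝟙 Vᘁ) := by
          conv_lhs => rw [← key]
          simp only [Category.assoc]
      _ = (ν • (η_ V Vᘁ ≫ (φ.inv ⊗ₘ φ.hom)))
            ≫ (β_ Vᘁ V).hom ≫ ((RibbonCategory.twist V).hom ⊗ₘ 𝟙 Vᘁ) := by rw [hν]
      _ = ν • ((η_ V Vᘁ ≫ (φ.inv ⊗ₘ φ.hom))
            ≫ (β_ Vᘁ V).hom ≫ ((RibbonCategory.twist V).hom ⊗ₘ 𝟙 Vᘁ)) := by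
          rw [Linear.smul_comp]
      _ = ν • (ν • η_ V Vᘁ) := by rw [rot2]
      _ = (ν ^ 2) • η_ V Vᘁ := by rw [smul_smul, sq]
  by_contra hne
  apply hη
  have h0 : (ν ^ 2 - 1) • η_ V Vᘁ = 0 := by
    rw [sub_smul, one_smul, ← main, sub_self]
  have hc := congrArg (fun x => (ν ^ 2 - 1)⁻¹ • x) h0
  simpa [smul_smul, inv_mul_cancel₀ (sub_ne_zero.mpr hne)] using hc
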